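/- arXiv:1003.1490 — 2 statements merged into one kernel-verified Lean document; each statement's English description precedes it below -/
import Mathlib

section
/- For a nearest-neighbour random walk on ℤ with right-step probability p ∈ (1/2, 1), the expected number of steps in an excursion from the origin that returns to the origin, summed appropriately, satisfies Σ_{k=1}^∞ (k-1) P{L = k} ≤ 1/(2p-1), where L is the length of an excursion (L = ∞ if the walk never returns). -/
set_option maxHeartbeats 1000000
open MeasureTheory ProbabilityTheory Filter Finset DyckStep



lemma dsum_eq (f g : ℕ → ℝ) (N : ℕ) :
    ∑ m ∈ range N, ∑ i ∈ range (m + 1), f i * g (m - i)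
      = ∑ i ∈ range N, f i * ∑ j ∈ range (N - i), g j := by
  induction N with
  | zero => simp
  | succ N ih =>
    have h1 : ∀ i ∈ range N, f i * ∑ j ∈ range (N + 1 - i), g j
        = f i * ∑ j ∈ range (N - i), g j + f i * g (N - i) := by
      intro i hi
      rw [mem_range] at hi
      have : N + 1 - i = (N - i) + 1 := by omega
      rw [this, Finset.sum_range_succ, mul_add]
    have hR : ∑ i ∈ range (N + 1), f i * ∑ j ∈ range (N + 1 - i), g j
        = (∑ i ∈ range N, f i * ∑ j ∈ range (N - i), g j)
          + ((∑ i ∈ range N, f i * g (N - i)) + f N * g 0) := by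
      rw [Finset.sum_range_succ, Finset.sum_congr rfl h1, Finset.sum_add_distrib]
      have : N + 1 - N = 1 := by omega
      rw [this, Finset.sum_range_one]
      ring
    rw [Finset.sum_range_succ, ih, hR, Finset.sum_range_succ]
    have : N - N = 0 := by omega
    rw [this]

lemma dsum_le {f g : ℕ → ℝ} (hf : ∀ i, 0 ≤ f i) (hg : ∀ i, 0 ≤ g i) (N : ℕ) :
    ∑ m ∈ range N, ∑ i ∈ range (m + 1), f i * g (m - i)
      ≤ (∑ i ∈ range N, f i) * (∑ j ∈ range N, g j) := by
  rw [dsum_eq, Finset.sum_mul]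
  refine Finset.sum_le_sum fun i hi => ?_
  refine mul_le_mul_of_nonneg_left ?_ (hf i)
  exact Finset.sum_le_sum_of_subset_of_nonneg
    (Finset.range_subset_range.2 (by omega)) (fun j _ _ => hg j)

lemma cat_sum_le {s : ℝ} (hs : 0 < s) (hs1 : s ≤ 1) (N : ℕ) :
    ∑ m ∈ range N, (catalan m : ℝ) * ((1 - s ^ 2) / 4) ^ m ≤ 2 / (1 + s) := by
  set x : ℝ := (1 - s ^ 2) / 4 with hxdef
  have hx : 0 ≤ x := by nlinarith
  have h1s : (0:ℝ) < 1 + s := by linarith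
  induction N with
  | zero => simp; positivity
  | succ N ih =>
    rw [Finset.sum_range_succ']
    have hterm : ∀ m ∈ range N, (catalan (m+1) : ℝ) * x ^ (m+1)
        = x * ∑ i ∈ range (m+1), ((catalan i : ℝ) * x ^ i) * ((catalan (m-i) : ℝ) * x ^ (m-i)) := by
      intro m hm
      rw [catalan_succ', Finset.Nat.sum_antidiagonal_eq_sum_range_succ_mk]
      push_cast
      rw [Finset.mul_sum, Finset.sum_mul]
      refine Finset.sum_congr rfl fun i hi => ?_
      rw [mem_range] at hi
      rw [show m + 1 = (i + (m - i)) + 1 by omega, pow_succ, pow_add]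
      ring
    rw [Finset.sum_congr rfl hterm, ← Finset.mul_sum]
    have hd := dsum_le (f := fun i => (catalan i : ℝ) * x ^ i)
      (g := fun i => (catalan i : ℝ) * x ^ i) (by intro i; positivity) (by intro i; positivity) N
    have hc : ∑ i ∈ range N, (catalan i : ℝ) * x ^ i ≤ 2 / (1 + s) := ih
    have hcnn : (0:ℝ) ≤ ∑ i ∈ range N, (catalan i : ℝ) * x ^ i := by
      apply Finset.sum_nonneg; intro i _; positivity
    have : ∑ m ∈ range N, ∑ i ∈ range (m+1), ((catalan i:ℝ) * x ^ i) * ((catalan (m-i):ℝ) * x ^ (m-i))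
        ≤ (2 / (1+s)) * (2 / (1+s)) := by
      calc _ ≤ (∑ i ∈ range N, (catalan i : ℝ) * x ^ i) * (∑ i ∈ range N, (catalan i : ℝ) * x ^ i) := hd
        _ ≤ (2 / (1+s)) * (2 / (1+s)) := by
            exact mul_le_mul hc hc hcnn (by positivity)
    have hfix : x * ((2 / (1+s)) * (2 / (1+s))) + 1 = 2 / (1 + s) := by
      rw [hxdef]; field_simp; ring
    calc x * (∑ m ∈ range N, ∑ i ∈ range (m+1), ((catalan i:ℝ) * x ^ i) * ((catalan (m-i):ℝ) * x ^ (m-i)))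
          + (catalan 0 : ℝ) * x ^ 0
        ≤ x * ((2 / (1+s)) * (2 / (1+s))) + 1 := by
          simp only [catalan_zero, Nat.cast_one, pow_zero, mul_one]
          exact add_le_add (mul_le_mul_of_nonneg_left this hx) le_rfl
      _ = 2 / (1 + s) := hfix

lemma centralBinom_rec (n : ℕ) :
    Nat.centralBinom (n + 1) = 2 * ∑ i ∈ range (n + 1), catalan i * Nat.centralBinom (n - i) := by
  have key : ∀ i ∈ range (n + 1), catalan i * Nat.centralBinom (n - i)
      = (n - i + 1) * (catalan i * catalan (n - i)) := by
    intro i hi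
    rw [← succ_mul_catalan_eq_centralBinom (n - i)]
    ring
  rw [Finset.sum_congr rfl key]
  have refl : ∑ i ∈ range (n + 1), (n - i + 1) * (catalan i * catalan (n - i))
      = ∑ i ∈ range (n + 1), (i + 1) * (catalan i * catalan (n - i)) := by
    rw [← Finset.sum_range_reflect]
    refine Finset.sum_congr rfl fun i hi => ?_
    rw [mem_range] at hi
    have h1 : n + 1 - 1 - i = n - i := by omega
    have h2 : n - (n - i) = i := by omega
    rw [h1, h2]
    ring
  have hsum : 2 * ∑ i ∈ range (n + 1), (n - i + 1) * (catalan i * catalan (n - i))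
      = (n + 2) * ∑ i ∈ range (n + 1), catalan i * catalan (n - i) := by
    rw [two_mul]
    nth_rewrite 2 [refl]
    rw [← Finset.sum_add_distrib, Finset.mul_sum]
    refine Finset.sum_congr rfl fun i hi => ?_
    rw [mem_range] at hi
    have : (n - i + 1) + (i + 1) = n + 2 := by omega
    rw [← add_mul, this]
  rw [hsum]
  have hc : ∑ i ∈ range (n + 1), catalan i * catalan (n - i) = catalan (n + 1) := by
    rw [catalan_succ', Finset.Nat.sum_antidiagonal_eq_sum_range_succ_mk]
  rw [hc, ← succ_mul_catalan_eq_centralBinom (n + 1)]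

lemma binom_sum_le {s : ℝ} (hs : 0 < s) (hs1 : s ≤ 1) (N : ℕ) :
    ∑ m ∈ range N, (Nat.centralBinom m : ℝ) * ((1 - s ^ 2) / 4) ^ m ≤ 1 / s := by
  set x : ℝ := (1 - s ^ 2) / 4 with hxdef
  have hx : 0 ≤ x := by nlinarith
  have h1s : (0:ℝ) < 1 + s := by linarith
  induction N with
  | zero => simp; positivity
  | succ N ih =>
    rw [Finset.sum_range_succ']
    have hterm : ∀ m ∈ range N, (Nat.centralBinom (m+1) : ℝ) * x ^ (m+1)
        = (2 * x) * ∑ i ∈ range (m+1),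
            ((catalan i : ℝ) * x ^ i) * ((Nat.centralBinom (m-i) : ℝ) * x ^ (m-i)) := by
      intro m hm
      rw [centralBinom_rec]
      push_cast
      rw [Finset.mul_sum, Finset.mul_sum, Finset.sum_mul]
      refine Finset.sum_congr rfl fun i hi => ?_
      rw [mem_range] at hi
      rw [show m + 1 = (i + (m - i)) + 1 by omega, pow_succ, pow_add]
      ring
    rw [Finset.sum_congr rfl hterm, ← Finset.mul_sum]
    have hd := dsum_le (f := fun i => (catalan i : ℝ) * x ^ i)
      (g := fun i => (Nat.centralBinom i : ℝ) * x ^ i)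
      (by intro i; positivity) (by intro i; positivity) N
    have hc : ∑ i ∈ range N, (catalan i : ℝ) * x ^ i ≤ 2 / (1 + s) := cat_sum_le hs hs1 N
    have hcnn : (0:ℝ) ≤ ∑ i ∈ range N, (catalan i : ℝ) * x ^ i :=
      Finset.sum_nonneg fun i _ => by positivity
    have hbnn : (0:ℝ) ≤ ∑ i ∈ range N, (Nat.centralBinom i : ℝ) * x ^ i :=
      Finset.sum_nonneg fun i _ => by positivity
    have hDD : ∑ m ∈ range N, ∑ i ∈ range (m+1),
          ((catalan i:ℝ) * x ^ i) * ((Nat.centralBinom (m-i):ℝ) * x ^ (m-i))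
        ≤ (2 / (1+s)) * (1 / s) :=
      le_trans hd (mul_le_mul hc ih hbnn (by positivity))
    have hfix : (2 * x) * ((2 / (1+s)) * (1 / s)) + 1 = 1 / s := by
      rw [hxdef]; field_simp; ring
    calc (2*x) * (∑ m ∈ range N, ∑ i ∈ range (m+1),
            ((catalan i:ℝ) * x ^ i) * ((Nat.centralBinom (m-i):ℝ) * x ^ (m-i)))
          + (Nat.centralBinom 0 : ℝ) * x ^ 0
        ≤ (2*x) * ((2 / (1+s)) * (1 / s)) + 1 := by
          simp only [Nat.centralBinom_zero, Nat.cast_one, pow_zero, mul_one]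
          exact add_le_add (mul_le_mul_of_nonneg_left hDD (by positivity)) le_rfl
      _ = 1 / s := hfix


def vext {n : ℕ} (v : Fin n → ℤ) (i : ℕ) : ℤ := if h : i < n then v ⟨i, h⟩ else 0
def psum {n : ℕ} (v : Fin n → ℤ) (t : ℕ) : ℤ := ∑ i ∈ Finset.range t, vext v i
def Vset (n : ℕ) : Finset (Fin n → ℤ) :=
  (Fintype.piFinset fun _ => ({1, -1} : Finset ℤ)).filter
    (fun v => psum v n = 0 ∧ ∀ t ∈ Finset.range n, 1 ≤ t → psum v t ≠ 0)
lemma vext_fin {n : ℕ} (v : Fin n → ℤ) (i : Fin n) : vext v i.1 = v i := by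
  simp [vext, i.2]
lemma psum_succ {n : ℕ} (v : Fin n → ℤ) (t : ℕ) :
    psum v (t + 1) = psum v t + vext v t := Finset.sum_range_succ _ _
lemma count_UD (l : List DyckStep) : l.count U + l.count D = l.length := by
  induction l with
  | nil => rfl
  | cons a l ih => cases a <;> simp [List.count_cons, ← ih] <;> omega
def stepList (m : ℕ) (v : Fin (2*m+2) → ℤ) : List DyckStep :=
  List.ofFn fun i : Fin (2*m) => if v ⟨i.1+1, by omega⟩ = v 0 then U else D
lemma stepList_length {m : ℕ} (v : Fin (2*m+2) → ℤ) : (stepList m v).length = 2*m := by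
  simp [stepList]

section core
variable {m : ℕ} {v : Fin (2*m+2) → ℤ}

lemma mem_Vset_unfold (hv : v ∈ Vset (2*m+2)) :
    (∀ i : Fin (2*m+2), v i = 1 ∨ v i = -1) ∧ psum v (2*m+2) = 0 ∧
      (∀ t, 1 ≤ t → t < 2*m+2 → psum v t ≠ 0) := by
  rw [Vset, Finset.mem_filter, Fintype.mem_piFinset] at hv
  obtain ⟨hpi, hsum, hne⟩ := hv
  refine ⟨fun i => ?_, hsum, fun t h1 h2 => hne t (Finset.mem_range.2 h2) h1⟩
  have := hpi i
  rwa [Finset.mem_insert, Finset.mem_singleton] at this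

lemma psum_one : psum v 1 = v 0 := by
  rw [psum, Finset.sum_range_one]
  exact vext_fin v 0

lemma sq_v0 (hpm : ∀ i : Fin (2*m+2), v i = 1 ∨ v i = -1) : v 0 * v 0 = 1 := by
  rcases hpm 0 with h | h <;> rw [h] <;> ring

lemma vcases (hpm : ∀ i : Fin (2*m+2), v i = 1 ∨ v i = -1) (i : Fin (2*m+2)) :
    v i = v 0 ∨ v i = -(v 0) := by
  rcases hpm 0 with h | h <;> rcases hpm i with h' | h' <;> rw [h, h'] <;> simp

lemma hpos (hv : v ∈ Vset (2*m+2)) :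
    ∀ t, 1 ≤ t → t ≤ 2*m+1 → 1 ≤ v 0 * psum v t := by
  obtain ⟨hpm, hzero, hne⟩ := mem_Vset_unfold hv
  have hσ2 := sq_v0 hpm
  intro t h1 h2
  induction t with
  | zero => omega
  | succ t ih =>
    rcases Nat.eq_or_lt_of_le h1 with h | h
    · rw [← h, psum_one, hσ2]
    · have ih' := ih (by omega) (by omega)
      have hv' : vext v t = v ⟨t, by omega⟩ := vext_fin v ⟨t, by omega⟩
      have hstep : v 0 * vext v t = 1 ∨ v 0 * vext v t = -1 := by
        rw [hv']
        rcases vcases hpm ⟨t, by omega⟩ with h' | h' <;> rw [h']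
        · left; exact hσ2
        · right; rw [mul_neg, hσ2]
      have hne' : psum v (t+1) ≠ 0 := hne (t+1) (by omega) (by omega)
      have hnz : v 0 * psum v (t+1) ≠ 0 := by
        intro hc
        rcases mul_eq_zero.mp hc with hc | hc
        · rcases hpm 0 with h' | h' <;> rw [h'] at hc <;> norm_num at hc
        · exact hne' hc
      rw [psum_succ, mul_add] at hnz ⊢
      omega

lemma count_take (hv : v ∈ Vset (2*m+2)) :
    ∀ t, t ≤ 2*m → ((((stepList m v).take t).count U : ℤ) - (((stepList m v).take t).count D : ℤ)
      = v 0 * psum v (t+1) - 1) := by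
  obtain ⟨hpm, hzero, hne⟩ := mem_Vset_unfold hv
  have hσ2 := sq_v0 hpm
  intro t
  induction t with
  | zero =>
    intro _
    simp only [zero_add, List.take_zero, List.count_nil, Nat.cast_zero, sub_zero, psum_one, hσ2]
    norm_num
  | succ t ih =>
    intro ht
    have ih' := ih (by omega)
    have hget : (stepList m v)[t]? =
        some (if v ⟨t+1, by omega⟩ = v 0 then U else D) := by
      rw [List.getElem?_eq_getElem (by rw [stepList_length]; omega)]
      simp [stepList]
    have hv' : vext v (t+1) = v ⟨t+1, by omega⟩ := vext_fin v ⟨t+1, by omega⟩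
    rw [List.take_succ, hget, Option.toList_some]
    rcases vcases hpm ⟨t+1, by omega⟩ with hc | hc
    · rw [if_pos hc]
      simp only [List.count_append, List.count_singleton']
      norm_num
      rw [psum_succ (t := t+1), hv', hc, mul_add, hσ2]
      push_cast
      linarith [ih']
    · rw [if_neg (by rw [hc]; intro hcc; rcases hpm 0 with h' | h' <;> rw [h'] at hcc <;> norm_num at hcc)]
      simp only [List.count_append, List.count_singleton']
      norm_num
      rw [psum_succ (t := t+1), hv', hc, mul_add, mul_neg, hσ2]
      push_cast
      linarith [ih']

end core
section g
variable {m : ℕ} {v : Fin (2*m+2) → ℤ}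

lemma hlast (hv : v ∈ Vset (2*m+2)) : v ⟨2*m+1, by omega⟩ = -(v 0) := by
  obtain ⟨hpm, hzero, hne⟩ := mem_Vset_unfold hv
  have hσ2 := sq_v0 hpm
  have hp := hpos hv (2*m+1) (by omega) (by omega)
  have hs : psum v (2*m+2) = psum v (2*m+1) + v ⟨2*m+1, by omega⟩ := by
    rw [psum_succ]
    congr 1
    exact vext_fin v ⟨2*m+1, by omega⟩
  rcases vcases hpm ⟨2*m+1, by omega⟩ with hc | hc
  · exfalso
    rw [hzero, hc] at hs
    have : psum v (2*m+1) = -(v 0) := by linarith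
    rw [this, mul_neg, hσ2] at hp
    omega
  · exact hc

lemma hfull (hv : v ∈ Vset (2*m+2)) : v 0 * psum v (2*m+1) = 1 := by
  obtain ⟨hpm, hzero, hne⟩ := mem_Vset_unfold hv
  have hσ2 := sq_v0 hpm
  have hs : psum v (2*m+2) = psum v (2*m+1) + v ⟨2*m+1, by omega⟩ := by
    rw [psum_succ]; congr 1; exact vext_fin v ⟨2*m+1, by omega⟩
  rw [hzero, hlast hv] at hs
  have : psum v (2*m+1) = v 0 := by linarith
  rw [this, hσ2]

lemma take_all (hv : v ∈ Vset (2*m+2)) {i : ℕ} (hi : 2*m ≤ i) :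
    (stepList m v).take i = stepList m v :=
  List.take_of_length_le (by rw [stepList_length]; omega)

lemma hUD (hv : v ∈ Vset (2*m+2)) : (stepList m v).count U = (stepList m v).count D := by
  have h := count_take hv (2*m) le_rfl
  rw [take_all hv le_rfl, hfull hv] at h
  omega

lemma hpre (hv : v ∈ Vset (2*m+2)) (i : ℕ) :
    ((stepList m v).take i).count D ≤ ((stepList m v).take i).count U := by
  rcases le_or_gt i (2*m) with hi | hi
  · have h := count_take hv i hi
    have hp := hpos hv (i+1) (by omega) (by omega)
    omega
  · rw [take_all hv (by omega)]
    exact le_of_eq (hUD hv).symm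

def wd (hv : v ∈ Vset (2*m+2)) : DyckWord := ⟨stepList m v, hUD hv, hpre hv⟩

lemma wd_semilength (hv : v ∈ Vset (2*m+2)) : (wd hv).semilength = m := by
  have h2 := (wd hv).two_mul_semilength_eq_length
  have : (wd hv).toList.length = 2*m := stepList_length v
  omega

lemma Vset_card_le (m : ℕ) : (Vset (2*m+2)).card ≤ 2 * catalan m := by
  classical
  have hinj2 : Function.Injective (fun w : {w : DyckWord // w.semilength = m} => w.1.toList) :=
    fun a b hab => Subtype.ext (DyckWord.ext hab)
  have hT : ((Finset.univ : Finset Bool) ×ˢ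
      ((Finset.univ : Finset {w : DyckWord // w.semilength = m}).image
        fun w => w.1.toList)).card = 2 * catalan m := by
    rw [Finset.card_product, Finset.card_image_of_injective _ hinj2, Finset.card_univ,
      Finset.card_univ, Fintype.card_bool, DyckWord.card_dyckWord_semilength_eq_catalan]
  rw [← hT]
  apply Finset.card_le_card_of_injOn (fun v => (decide (v 0 = 1), stepList m v))
  · intro v hv
    rw [Finset.mem_coe, Finset.mem_product]
    refine ⟨Finset.mem_univ _, ?_⟩
    rw [Finset.mem_image]
    exact ⟨⟨wd hv, wd_semilength hv⟩, Finset.mem_univ _, rfl⟩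
  · intro v hv v' hv' heq
    simp only [Finset.mem_coe] at hv hv'
    obtain ⟨hpm, -, -⟩ := mem_Vset_unfold hv
    obtain ⟨hpm', -, -⟩ := mem_Vset_unfold hv'
    rw [Prod.mk.injEq] at heq
    obtain ⟨hb, hl⟩ := heq
    have h0 : v 0 = v' 0 := by
      rw [decide_eq_decide] at hb
      rcases hpm 0 with h | h <;> rcases hpm' 0 with h' | h' <;> rw [h, h'] <;>
        first
        | rfl
        | (exfalso; rw [h, h'] at hb; norm_num at hb)
    have hfn := List.ofFn_inj.mp hl
    funext i
    rcases Nat.lt_or_ge i.1 1 with hi | hi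
    · have : i = (⟨0, by omega⟩ : Fin (2*m+2)) := Fin.ext (show i.1 = 0 by omega)
      rw [this]
      exact h0
    rcases Nat.lt_or_ge i.1 (2*m+1) with hi2 | hi2
    · have hj : i.1 - 1 < 2*m := by omega
      have happ := congrFun hfn ⟨i.1 - 1, hj⟩
      simp only at happ
      have hieq : (⟨(i.1 - 1) + 1, by omega⟩ : Fin (2*m+2)) = i := Fin.ext (by simp; omega)
      rw [hieq] at happ
      have hne10 : v 0 ≠ -(v 0) := by
        rcases hpm 0 with h | h <;> rw [h] <;> norm_num
      have hne10' : v' 0 ≠ -(v' 0) := by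
        rcases hpm' 0 with h | h <;> rw [h] <;> norm_num
      rcases vcases hpm i with hc | hc
      · rw [if_pos hc] at happ
        rcases vcases hpm' i with hc' | hc'
        · rw [hc, hc', h0]
        · rw [if_neg (by rw [hc']; exact fun hh => hne10' hh.symm)] at happ
          exact absurd happ (by simp)
      · rw [if_neg (by rw [hc]; exact fun hh => hne10 hh.symm)] at happ
        rcases vcases hpm' i with hc' | hc'
        · rw [if_pos hc'] at happ
          exact absurd happ (by simp)
        · rw [hc, hc', h0]
    · have : i = (⟨2*m+1, by omega⟩ : Fin (2*m+2)) := Fin.ext (show i.1 = 2*m+1 by omega)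
      rw [this, hlast hv, hlast hv', h0]
end g
lemma even_of_mem_Vset {n : ℕ} {v : Fin n → ℤ} (hv : v ∈ Vset n) : 2 ∣ n := by
  rw [Vset, Finset.mem_filter, Fintype.mem_piFinset] at hv
  obtain ⟨hpi, hsum, -⟩ := hv
  have key : ((psum v n : ℤ) : ZMod 2) = (n : ZMod 2) := by
    rw [psum, Int.cast_sum]
    rw [Finset.sum_congr rfl (fun i hi => ?_), Finset.sum_const, Finset.card_range,
      nsmul_eq_mul, mul_one]
    rw [Finset.mem_range] at hi
    have := hpi ⟨i, hi⟩
    rw [Finset.mem_insert, Finset.mem_singleton] at this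
    rw [show vext v i = v ⟨i, hi⟩ from vext_fin v ⟨i, hi⟩]
    rcases this with h | h <;> rw [h] <;> decide
  rw [hsum] at key
  have : (n : ZMod 2) = 0 := by simpa using key.symm
  exact (ZMod.natCast_eq_zero_iff n 2).mp this

noncomputable def muv (p : ℝ) (c : ℤ) : ENNReal :=
  if c = 1 then ENNReal.ofReal p else if c = -1 then ENNReal.ofReal (1-p) else 0

section meas
variable {Ω : Type*} [MeasurableSpace Ω] (P : Measure Ω)
  (p : ℝ) (X : ℕ → Ω → ℤ) (hmeas : ∀ n, Measurable (X n))
  (hdist : ∀ n, Measure.map (X n) P =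
      (ENNReal.ofReal p) • Measure.dirac (1 : ℤ) +
        (ENNReal.ofReal (1 - p)) • Measure.dirac (-1 : ℤ))

include hmeas hdist

lemma mapX_singleton (i : ℕ) (c : ℤ) : P (X i ⁻¹' {c}) = muv p c := by
  rw [← Measure.map_apply (hmeas i) (measurableSet_singleton c), hdist i]
  simp only [Measure.coe_add, Measure.coe_smul, Pi.add_apply, Pi.smul_apply,
    Measure.dirac_apply, smul_eq_mul, muv]
  by_cases h1 : c = 1
  · subst h1
    simp [Set.indicator]
  · by_cases h2 : c = -1
    · subst h2
      simp [Set.indicator]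
    · simp [Set.indicator, h1, h2, Ne.symm h1, Ne.symm h2]

lemma bad_null (i : ℕ) : P {ω | X i ω ≠ 1 ∧ X i ω ≠ -1} = 0 := by
  have : {ω | X i ω ≠ 1 ∧ X i ω ≠ -1} = X i ⁻¹' ({1, -1}ᶜ : Set ℤ) := by
    ext ω; simp [and_comm]
  rw [this, ← Measure.map_apply (hmeas i) (by measurability), hdist i]
  simp only [Measure.coe_add, Measure.coe_smul, Pi.add_apply, Pi.smul_apply,
    Measure.dirac_apply, smul_eq_mul]
  rw [Set.indicator_of_notMem (by simp), Set.indicator_of_notMem (by simp)]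
  simp
end meas
section meas2
variable {Ω : Type*} [MeasurableSpace Ω] (P : Measure Ω)
  (p : ℝ) (X : ℕ → Ω → ℤ) (hmeas : ∀ n, Measurable (X n))
  (hindep : iIndepFun X P)
  (hdist : ∀ n, Measure.map (X n) P =
      (ENNReal.ofReal p) • Measure.dirac (1 : ℤ) +
        (ENNReal.ofReal (1 - p)) • Measure.dirac (-1 : ℤ))

include hmeas hindep hdist

lemma prob_le (n : ℕ) :
    P {ω | (∑ i ∈ Finset.range n, X i ω) = 0 ∧
        ∀ t, 1 ≤ t → t < n → (∑ i ∈ Finset.range t, X i ω) ≠ 0}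
      ≤ ∑ v ∈ Vset n, ∏ i ∈ Finset.range n, muv p (vext v i) := by
  classical
  set A := {ω | (∑ i ∈ Finset.range n, X i ω) = 0 ∧
      ∀ t, 1 ≤ t → t < n → (∑ i ∈ Finset.range t, X i ω) ≠ 0} with hA
  have cover : A ⊆ (⋃ i ∈ Finset.range n, {ω | X i ω ≠ 1 ∧ X i ω ≠ -1}) ∪
      ⋃ v ∈ Vset n, ⋂ i ∈ Finset.range n, X i ⁻¹' {vext v i} := by
    intro ω hω
    by_cases hbad : ∃ i ∈ Finset.range n, X i ω ≠ 1 ∧ X i ω ≠ -1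
    · left
      obtain ⟨i, hi, hii⟩ := hbad
      exact Set.mem_biUnion hi hii
    · right
      push_neg at hbad
      set vv : Fin n → ℤ := fun i => X i.1 ω with hvvdef
      have hvals : ∀ i : Fin n, vv i = 1 ∨ vv i = -1 := by
        intro i
        by_cases h1 : X i.1 ω = 1
        · left; exact h1
        · right; exact hbad i.1 (Finset.mem_range.2 i.2) h1
      have hps : ∀ t, t ≤ n → psum vv t = ∑ i ∈ Finset.range t, X i ω := by
        intro t ht
        refine Finset.sum_congr rfl fun i hi => ?_
        rw [Finset.mem_range] at hi
        have hin : i < n := by omega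
        simp [vext, hin, hvvdef]
      have hvv : vv ∈ Vset n := by
        rw [Vset, Finset.mem_filter, Fintype.mem_piFinset]
        refine ⟨fun i => ?_, ?_, ?_⟩
        · rcases hvals i with h | h <;> simp [h]
        · rw [hps n le_rfl]; exact hω.1
        · intro t htr h1
          rw [Finset.mem_range] at htr
          rw [hps t (by omega)]
          exact hω.2 t h1 htr
      refine Set.mem_biUnion hvv ?_
      refine Set.mem_biInter fun i hi => ?_
      have hi'' : i ∈ Finset.range n := hi
      have hi' : i < n := Finset.mem_range.mp hi''
      simp [vext, hi', hvvdef]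
  calc P A ≤ P ((⋃ i ∈ Finset.range n, {ω | X i ω ≠ 1 ∧ X i ω ≠ -1}) ∪
        ⋃ v ∈ Vset n, ⋂ i ∈ Finset.range n, X i ⁻¹' {vext v i}) := measure_mono cover
    _ ≤ P (⋃ i ∈ Finset.range n, {ω | X i ω ≠ 1 ∧ X i ω ≠ -1}) +
        P (⋃ v ∈ Vset n, ⋂ i ∈ Finset.range n, X i ⁻¹' {vext v i}) := measure_union_le _ _
    _ ≤ 0 + ∑ v ∈ Vset n, P (⋂ i ∈ Finset.range n, X i ⁻¹' {vext v i}) := by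
        refine add_le_add ?_ (MeasureTheory.measure_biUnion_finset_le _ _)
        refine le_trans (MeasureTheory.measure_biUnion_finset_le _ _) ?_
        refine le_of_eq (Finset.sum_eq_zero fun i _ => bad_null P p X hmeas hdist i)
    _ = ∑ v ∈ Vset n, ∏ i ∈ Finset.range n, muv p (vext v i) := by
        rw [zero_add]
        refine Finset.sum_congr rfl fun v hv => ?_
        rw [hindep.measure_inter_preimage_eq_mul (Finset.range n)
          (sets := fun i => {vext v i}) (fun i _ => measurableSet_singleton _)]
        exact Finset.prod_congr rfl fun i _ => mapX_singleton P p X hmeas hdist i _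

end meas2

lemma prod_muv {p : ℝ} {m : ℕ} {v : Fin (2*m+2) → ℤ} (hv : v ∈ Vset (2*m+2)) :
    ∏ i ∈ Finset.range (2*m+2), muv p (vext v i)
      = ENNReal.ofReal p ^ (m+1) * ENNReal.ofReal (1-p) ^ (m+1) := by
  classical
  obtain ⟨hpm, hzero, -⟩ := mem_Vset_unfold hv
  have h1 : ∏ i ∈ Finset.range (2*m+2), muv p (vext v i) = ∏ i : Fin (2*m+2), muv p (v i) := by
    rw [← Fin.prod_univ_eq_prod_range (fun i => muv p (vext v i)) (2*m+2)]
    exact Finset.prod_congr rfl fun i _ => by rw [vext_fin]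
  have h2 : psum v (2*m+2) = ∑ i : Fin (2*m+2), v i := by
    rw [psum, ← Fin.sum_univ_eq_sum_range (fun i => vext v i) (2*m+2)]
    exact Finset.sum_congr rfl fun i _ => vext_fin v i
  set Pos := Finset.univ.filter (fun i : Fin (2*m+2) => v i = 1) with hPos
  have hcard2 : Pos.card + (Finset.univ.filter (fun i : Fin (2*m+2) => ¬ (v i = 1))).card
      = 2*m+2 := by
    rw [Finset.card_filter_add_card_filter_not, Finset.card_univ, Fintype.card_fin]
  have hsplit : ∑ i : Fin (2*m+2), v i
      = (Pos.card : ℤ) * 1 + ((Finset.univ.filter (fun i : Fin (2*m+2) => ¬ (v i = 1))).card : ℤ) * (-1) := by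
    rw [← Finset.sum_filter_add_sum_filter_not Finset.univ (fun i => v i = 1)]
    congr 1
    · rw [Finset.sum_congr rfl (fun i hi => (Finset.mem_filter.mp hi).2), Finset.sum_const,
        nsmul_eq_mul, mul_one]
    · rw [Finset.sum_congr rfl (fun i hi => ?_), Finset.sum_const, nsmul_eq_mul]
      have := (Finset.mem_filter.mp hi).2
      rcases hpm i with h | h
      · exact absurd h this
      · exact h
  have hPcard : Pos.card = m+1 ∧
      (Finset.univ.filter (fun i : Fin (2*m+2) => ¬ (v i = 1))).card = m+1 := by
    rw [hzero] at h2
    rw [← h2] at hsplit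
    omega
  rw [h1, ← Finset.prod_filter_mul_prod_filter_not Finset.univ (fun i => v i = 1)]
  have hA : ∏ i ∈ Pos, muv p (v i) = ENNReal.ofReal p ^ (m+1) := by
    rw [Finset.prod_congr rfl (fun i hi => ?_), Finset.prod_const, hPcard.1]
    rw [(Finset.mem_filter.mp hi).2]
    rfl
  have hB : ∏ i ∈ Finset.univ.filter (fun i : Fin (2*m+2) => ¬ (v i = 1)), muv p (v i)
      = ENNReal.ofReal (1-p) ^ (m+1) := by
    rw [Finset.prod_congr rfl (fun i hi => ?_), Finset.prod_const, hPcard.2]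
    have := (Finset.mem_filter.mp hi).2
    rcases hpm i with h | h
    · exact absurd h this
    · rw [h]; rfl
  rw [hA, hB]

lemma Vset_odd (M : ℕ) : Vset (2*M+1) = ∅ := by
  rw [Finset.eq_empty_iff_forall_notMem]
  intro v hv
  have := even_of_mem_Vset hv
  omega
/-- For a nearest-neighbour random walk on ℤ with right-step probability `p ∈ (1/2,1)`,
and `L` the length of an excursion from the origin (`L = min{n ≥ 1 : S n = 0}`, `L = ∞`
if there is no return), one has `Σ_{k≥1} (k-1) P{L = k} ≤ 1/(2p-1)`. -/
theorem stmt5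
    {Ω : Type*} [MeasurableSpace Ω] (P : Measure Ω) [IsProbabilityMeasure P]
    (p : ℝ) (hp : 1/2 < p) (hp1 : p < 1)
    (X : ℕ → Ω → ℤ) (hmeas : ∀ n, Measurable (X n))
    (hindep : iIndepFun X P)
    (hdist : ∀ n, Measure.map (X n) P =
      (ENNReal.ofReal p) • Measure.dirac (1 : ℤ) +
        (ENNReal.ofReal (1 - p)) • Measure.dirac (-1 : ℤ)) :
    ∑' k : ℕ, (k : ℝ) *
        (P {ω | (∑ i ∈ Finset.range (k + 1), X i ω) = 0 ∧
            ∀ n, 1 ≤ n → n < k + 1 → (∑ i ∈ Finset.range n, X i ω) ≠ 0}).toReal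
      ≤ 1 / (2 * p - 1) := by
  have hp0 : 0 ≤ p := by linarith
  have hq0 : 0 ≤ 1 - p := by linarith
  have hs0 : 0 < 2*p - 1 := by linarith
  have hs1 : 2*p - 1 ≤ 1 := by linarith
  set x : ℝ := p * (1 - p) with hx
  have hx0 : 0 ≤ x := mul_nonneg hp0 hq0
  have hxeq : x = (1 - (2*p-1)^2)/4 := by rw [hx]; ring
  set F : ℕ → ℝ := fun k => (k : ℝ) *
      (P {ω | (∑ i ∈ Finset.range (k + 1), X i ω) = 0 ∧
          ∀ n, 1 ≤ n → n < k + 1 → (∑ i ∈ Finset.range n, X i ω) ≠ 0}).toReal with hF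
  have hFnn : ∀ k, 0 ≤ F k := fun k =>
    mul_nonneg (Nat.cast_nonneg k) ENNReal.toReal_nonneg
  have hPle := prob_le P p X hmeas hindep hdist
  -- even k (odd number of steps) gives zero
  have hzeroterm : ∀ M : ℕ, F (2*M) = 0 := by
    intro M
    have h0 : P {ω | (∑ i ∈ Finset.range (2*M + 1), X i ω) = 0 ∧
        ∀ n, 1 ≤ n → n < 2*M + 1 → (∑ i ∈ Finset.range n, X i ω) ≠ 0} = 0 := by
      refine le_antisymm ?_ zero_le
      refine le_trans (hPle (2*M+1)) ?_
      rw [Vset_odd M, Finset.sum_empty]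
    rw [hF]
    simp only [h0, ENNReal.toReal_zero, mul_zero]
  -- odd k bound
  have hoddterm : ∀ M : ℕ, F (2*M+1) ≤ 4 * (Nat.centralBinom M : ℝ) * x^(M+1) := by
    intro M
    have h1 : P {ω | (∑ i ∈ Finset.range (2*M+1 + 1), X i ω) = 0 ∧
        ∀ n, 1 ≤ n → n < 2*M+1 + 1 → (∑ i ∈ Finset.range n, X i ω) ≠ 0}
        ≤ ((Vset (2*M+2)).card : ENNReal) *
          (ENNReal.ofReal p ^ (M+1) * ENNReal.ofReal (1-p) ^ (M+1)) := by
      refine le_trans (le_of_eq (by rfl)) (le_trans (hPle (2*M+2)) ?_)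
      rw [Finset.sum_congr rfl (fun v hv => prod_muv hv), Finset.sum_const, nsmul_eq_mul]
    have hne : ((Vset (2*M+2)).card : ENNReal) *
        (ENNReal.ofReal p ^ (M+1) * ENNReal.ofReal (1-p) ^ (M+1)) ≠ ⊤ :=
      ENNReal.mul_ne_top (ENNReal.natCast_ne_top _)
        (ENNReal.mul_ne_top (ENNReal.pow_ne_top ENNReal.ofReal_ne_top)
          (ENNReal.pow_ne_top ENNReal.ofReal_ne_top))
    have h2 := ENNReal.toReal_mono hne h1
    rw [ENNReal.toReal_mul, ENNReal.toReal_mul, ENNReal.toReal_natCast,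
      ENNReal.toReal_pow, ENNReal.toReal_pow, ENNReal.toReal_ofReal hp0,
      ENNReal.toReal_ofReal hq0] at h2
    have hnat : (2*M+1) * (Vset (2*M+2)).card ≤ 4 * Nat.centralBinom M := by
      calc (2*M+1) * (Vset (2*M+2)).card ≤ (2*M+1) * (2 * catalan M) :=
            Nat.mul_le_mul_left _ (Vset_card_le M)
        _ = (2*(2*M+1)) * catalan M := by ring
        _ ≤ (4*(M+1)) * catalan M := Nat.mul_le_mul_right _ (by omega)
        _ = 4 * ((M+1) * catalan M) := by ring
        _ = 4 * Nat.centralBinom M := by rw [succ_mul_catalan_eq_centralBinom]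
    calc F (2*M+1) ≤ ((2*M+1 : ℕ) : ℝ) * (((Vset (2*M+2)).card : ℝ) *
          (p ^ (M+1) * (1-p) ^ (M+1))) := by
          rw [hF]
          push_cast
          refine mul_le_mul_of_nonneg_left h2 (by positivity)
      _ = (((2*M+1) * (Vset (2*M+2)).card : ℕ) : ℝ) * x^(M+1) := by
          rw [hx]
          push_cast
          rw [mul_pow]
          ring
      _ ≤ ((4 * Nat.centralBinom M : ℕ) : ℝ) * x^(M+1) := by
          refine mul_le_mul_of_nonneg_right ?_ (by positivity)
          exact_mod_cast hnat
      _ = 4 * (Nat.centralBinom M : ℝ) * x^(M+1) := by push_cast; ring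
  have key : ∀ M : ℕ, ∑ k ∈ Finset.range (2*M), F k
      ≤ ∑ m ∈ Finset.range M, 4 * (Nat.centralBinom m : ℝ) * x^(m+1) := by
    intro M
    induction M with
    | zero => simp
    | succ M ih =>
      rw [show 2*(M+1) = (2*M+1)+1 by ring, Finset.sum_range_succ, Finset.sum_range_succ,
        Finset.sum_range_succ, hzeroterm M, add_zero]
      exact add_le_add ih (hoddterm M)
  have tail : ∀ M : ℕ, ∑ m ∈ Finset.range M, 4 * (Nat.centralBinom m : ℝ) * x^(m+1)
      ≤ 1 / (2*p-1) := by
    intro M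
    have heq : ∑ m ∈ Finset.range M, 4 * (Nat.centralBinom m : ℝ) * x^(m+1)
        = (4*x) * ∑ m ∈ Finset.range M, (Nat.centralBinom m : ℝ) * x^m := by
      rw [Finset.mul_sum]
      refine Finset.sum_congr rfl fun m _ => ?_
      rw [pow_succ]
      ring
    rw [heq]
    have hb := binom_sum_le hs0 hs1 M
    rw [← hxeq] at hb
    calc (4*x) * ∑ m ∈ Finset.range M, (Nat.centralBinom m : ℝ) * x^m
        ≤ (4*x) * (1/(2*p-1)) := by
          refine mul_le_mul_of_nonneg_left hb (by positivity)
      _ ≤ 1 * (1/(2*p-1)) := by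
          refine mul_le_mul_of_nonneg_right (by nlinarith) (by positivity)
      _ = 1 / (2*p-1) := one_mul _
  refine Real.tsum_le_of_sum_range_le hFnn fun N => ?_
  calc ∑ k ∈ Finset.range N, F k ≤ ∑ k ∈ Finset.range (2*N), F k :=
        Finset.sum_le_sum_of_subset_of_nonneg
          (Finset.range_subset_range.2 (by omega)) (fun i _ _ => hFnn i)
    _ ≤ ∑ m ∈ Finset.range N, 4 * (Nat.centralBinom m : ℝ) * x^(m+1) := key N
    _ ≤ 1 / (2*p-1) := tail N
end

section
/- With V = X + Y as above (X exponential mean m, Y ≥ 0 independent), for the first passage time θ_x = min{n ≥ 1 : Σ_{i=1}^n V_i ≥ x}, the overshoot satisfies P{Σ_{i=1}^{θ_x} V_i ≤ x + y} ≤ min{1, y/m} for all x, y > 0. -/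
open MeasureTheory ProbabilityTheory Filter Finset


lemma keyX {Ω : Type*} [MeasurableSpace Ω] (P : Measure Ω) [IsProbabilityMeasure P]
    (m : ℝ) (hm : 0 < m) (X : Ω → ℝ) (hX : Measurable X)
    (hXexp : ∀ t : ℝ, 0 ≤ t → P {ω | X ω ≤ t} = ENNReal.ofReal (1 - Real.exp (-t / m)))
    (hXpos : P {ω | X ω < 0} = 0)
    (y : ℝ) (hy : 0 < y) (b : ℝ) :
    P {ω | b ≤ X ω ∧ X ω ≤ b + y} ≤ ENNReal.ofReal (y / m) * P {ω | b ≤ X ω} := by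
  have hym : 0 ≤ y / m := le_of_lt (div_pos hy hm)
  rcases le_or_gt b 0 with hb | hb
  · -- b ≤ 0 : P {b ≤ X} = 1
    have h1 : P {ω | b ≤ X ω} = 1 := by
      have hc : P {ω | b ≤ X ω}ᶜ = 0 := by
        refine measure_mono_null ?_ hXpos
        intro ω hω
        simp only [Set.mem_compl_iff, Set.mem_setOf_eq, not_le] at hω ⊢
        linarith
      have := measure_add_measure_compl (μ := P) (s := {ω | b ≤ X ω})
        (measurableSet_le measurable_const hX)
      rw [hc, add_zero] at this
      simpa using this
    rw [h1, mul_one]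
    rcases lt_or_ge (b + y) 0 with hby | hby
    · have : P {ω | b ≤ X ω ∧ X ω ≤ b + y} = 0 := by
        refine measure_mono_null ?_ hXpos
        intro ω ⟨_, h2⟩
        simp only [Set.mem_setOf_eq]
        linarith
      simp [this]
    · calc P {ω | b ≤ X ω ∧ X ω ≤ b + y} ≤ P {ω | X ω ≤ b + y} :=
            measure_mono (fun ω hω => hω.2)
        _ = ENNReal.ofReal (1 - Real.exp (-(b + y) / m)) := hXexp _ hby
        _ ≤ ENNReal.ofReal (y / m) := by
            apply ENNReal.ofReal_le_ofReal
            have hexp := Real.add_one_le_exp (-(b+y)/m)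
            have hdiv : -(b+y)/m = -((b+y)/m) := neg_div _ _
            have h3 : (b + y)/m ≤ y/m := by gcongr; linarith
            linarith
  · -- b > 0
    set e0 := Real.exp (-(b + y) / m) with he0
    have claim1 : ∀ t : ℝ, 0 ≤ t → t < b →
        P {ω | b ≤ X ω ∧ X ω ≤ b + y} ≤ ENNReal.ofReal (Real.exp (-t / m) - e0) := by
      intro t ht htb
      have hdisj : Disjoint {ω | X ω ≤ t} {ω | b ≤ X ω ∧ X ω ≤ b + y} := by
        rw [Set.disjoint_left]
        rintro ω h1 ⟨h2, _⟩
        simp only [Set.mem_setOf_eq] at h1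
        linarith
      have hsub : {ω | X ω ≤ t} ∪ {ω | b ≤ X ω ∧ X ω ≤ b + y} ⊆ {ω | X ω ≤ b + y} := by
        rintro ω (h | ⟨_, h⟩) <;> simp only [Set.mem_setOf_eq] at * <;> linarith
      have hmeas2 : MeasurableSet {ω | b ≤ X ω ∧ X ω ≤ b + y} :=
        (measurableSet_le measurable_const hX).inter (measurableSet_le hX measurable_const)
      have hadd : P {ω | X ω ≤ t} + P {ω | b ≤ X ω ∧ X ω ≤ b + y} ≤ P {ω | X ω ≤ b + y} := by
        rw [← measure_union hdisj hmeas2]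
        exact measure_mono hsub
      rw [hXexp t ht, hXexp (b + y) (by linarith)] at hadd
      have h5 : Real.exp (-t/m) ≤ 1 :=
        Real.exp_le_one_iff.mpr (by rw [neg_div]; exact neg_nonpos.mpr (div_nonneg ht hm.le))
      have h6 : e0 ≤ Real.exp (-t/m) := by
        apply Real.exp_le_exp.mpr
        rw [neg_div, neg_div, neg_le_neg_iff]
        gcongr
        linarith
      have h7 : ENNReal.ofReal (1 - Real.exp (-t / m)) + P {ω | b ≤ X ω ∧ X ω ≤ b + y} ≤
          ENNReal.ofReal (1 - Real.exp (-t / m)) + ENNReal.ofReal (Real.exp (-t/m) - e0) := by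
        refine hadd.trans_eq ?_
        rw [← ENNReal.ofReal_add (by linarith) (by linarith)]
        congr 1
        ring
      exact (ENNReal.add_le_add_iff_left ENNReal.ofReal_ne_top).mp h7
    -- limit t → b⁻
    have hlim : P {ω | b ≤ X ω ∧ X ω ≤ b + y} ≤ ENNReal.ofReal (Real.exp (-b / m) - e0) := by
      have htend : Tendsto (fun n : ℕ => b - b / (n + 2)) atTop (nhds b) := by
        have h0 : Tendsto (fun n : ℕ => b / (n + 2)) atTop (nhds 0) := by
          apply Tendsto.const_div_atTop
          exact tendsto_atTop_add_const_right _ 2 tendsto_natCast_atTop_atTop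
        simpa using tendsto_const_nhds.sub h0
      have hcont : Continuous (fun t : ℝ => ENNReal.ofReal (Real.exp (-t / m) - e0)) := by
        apply ENNReal.continuous_ofReal.comp
        exact ((Real.continuous_exp.comp ((continuous_neg).div_const m)).sub continuous_const)
      have htend2 : Tendsto (fun n : ℕ => ENNReal.ofReal (Real.exp (-(b - b / (n + 2)) / m) - e0))
          atTop (nhds (ENNReal.ofReal (Real.exp (-b / m) - e0))) :=
        (hcont.continuousAt.tendsto).comp htend
      refine ge_of_tendsto' htend2 fun n => claim1 _ ?_ ?_
      · have h1 : b / ((n:ℝ) + 2) ≤ b / 1 := by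
          apply div_le_div_of_nonneg_left hb.le one_pos
          push_cast; linarith [Nat.cast_nonneg (α := ℝ) n]
        simp only [div_one] at h1; linarith
      · have : 0 < b / ((n:ℝ) + 2) := by positivity
        linarith
    have hge : ENNReal.ofReal (Real.exp (-b / m)) ≤ P {ω | b ≤ X ω} := by
      have hc : {ω | b ≤ X ω}ᶜ = {ω | X ω < b} := by ext ω; simp [not_le]
      have h8 : P {ω | X ω < b} ≤ ENNReal.ofReal (1 - Real.exp (-b / m)) := by
        rw [← hXexp b hb.le]
        apply measure_mono
        intro ω h
        simp only [Set.mem_setOf_eq] at h ⊢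
        exact h.le
      have h9 : P {ω | b ≤ X ω} + P {ω | X ω < b} = 1 := by
        rw [← hc]
        simpa using measure_add_measure_compl (μ := P) (s := {ω | b ≤ X ω})
          (measurableSet_le measurable_const hX)
      have hle1 : Real.exp (-b/m) ≤ 1 :=
        Real.exp_le_one_iff.mpr (by rw [neg_div]; exact neg_nonpos.mpr (div_nonneg hb.le hm.le))
      have h10 : ENNReal.ofReal (Real.exp (-b / m)) + P {ω | X ω < b} ≤ 1 := by
        calc ENNReal.ofReal (Real.exp (-b / m)) + P {ω | X ω < b}
            ≤ ENNReal.ofReal (Real.exp (-b / m)) + ENNReal.ofReal (1 - Real.exp (-b / m)) :=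
              add_le_add_right h8 _
          _ = 1 := by rw [← ENNReal.ofReal_add (by positivity) (by linarith)]; simp
      rw [← h9] at h10
      exact (ENNReal.add_le_add_iff_right (measure_ne_top P _)).mp h10
    have hb1 : Real.exp (-b / m) - e0 ≤ (y / m) * Real.exp (-b / m) := by
      have he : e0 = Real.exp (-b/m) * Real.exp (-y/m) := by
        rw [he0, ← Real.exp_add]
        congr 1
        ring
      have h2 := Real.add_one_le_exp (-y/m)
      have hdiv : -y/m = -(y/m) := neg_div _ _
      rw [he]
      nlinarith [Real.exp_pos (-b/m)]
    calc P {ω | b ≤ X ω ∧ X ω ≤ b + y} ≤ ENNReal.ofReal (Real.exp (-b / m) - e0) := hlim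
      _ ≤ ENNReal.ofReal ((y / m) * Real.exp (-b / m)) := ENNReal.ofReal_le_ofReal hb1
      _ = ENNReal.ofReal (y / m) * ENNReal.ofReal (Real.exp (-b / m)) := ENNReal.ofReal_mul hym
      _ ≤ ENNReal.ofReal (y / m) * P {ω | b ≤ X ω} := mul_le_mul_right hge _

lemma keyV {Ω : Type*} [MeasurableSpace Ω] (P : Measure Ω) [IsProbabilityMeasure P]
    (m : ℝ) (hm : 0 < m) (X Y : Ω → ℝ) (hX : Measurable X) (hY : Measurable Y)
    (hXY : IndepFun X Y P)
    (hXexp : ∀ t : ℝ, 0 ≤ t → P {ω | X ω ≤ t} = ENNReal.ofReal (1 - Real.exp (-t / m)))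
    (hXpos : P {ω | X ω < 0} = 0)
    (y : ℝ) (hy : 0 < y) (a : ℝ) :
    (Measure.map (fun ω => X ω + Y ω) P) {v | a ≤ v ∧ v ≤ a + y} ≤
      ENNReal.ofReal (y / m) * (Measure.map (fun ω => X ω + Y ω) P) {v | a ≤ v} := by
  set c := ENNReal.ofReal (y / m) with hc
  have hXY2 : Measurable (fun ω => (X ω, Y ω)) := hX.prodMk hY
  have hprod : Measure.map (fun ω => (X ω, Y ω)) P = (Measure.map X P).prod (Measure.map Y P) :=
    (indepFun_iff_map_prod_eq_prod_map_map hX.aemeasurable hY.aemeasurable).mp hXY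
  have hmeas1 : MeasurableSet {v : ℝ | a ≤ v ∧ v ≤ a + y} :=
    (measurableSet_le measurable_const measurable_id).inter
      (measurableSet_le measurable_id measurable_const)
  have hmeas2 : MeasurableSet {v : ℝ | a ≤ v} := measurableSet_le measurable_const measurable_id
  have hT1 : MeasurableSet {p : ℝ × ℝ | a ≤ p.1 + p.2 ∧ p.1 + p.2 ≤ a + y} :=
    (measurableSet_le measurable_const (measurable_fst.add measurable_snd)).inter
      (measurableSet_le (measurable_fst.add measurable_snd) measurable_const)
  have hT2 : MeasurableSet {p : ℝ × ℝ | a ≤ p.1 + p.2} :=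
    measurableSet_le measurable_const (measurable_fst.add measurable_snd)
  have e1 : (Measure.map (fun ω => X ω + Y ω) P) {v | a ≤ v ∧ v ≤ a + y} =
      ((Measure.map X P).prod (Measure.map Y P)) {p : ℝ × ℝ | a ≤ p.1 + p.2 ∧ p.1 + p.2 ≤ a + y} := by
    rw [Measure.map_apply (f := fun ω => X ω + Y ω) (hX.add hY) hmeas1, ← hprod,
      Measure.map_apply hXY2 hT1]
    rfl
  have e2 : (Measure.map (fun ω => X ω + Y ω) P) {v | a ≤ v} =
      ((Measure.map X P).prod (Measure.map Y P)) {p : ℝ × ℝ | a ≤ p.1 + p.2} := by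
    rw [Measure.map_apply (f := fun ω => X ω + Y ω) (hX.add hY) hmeas2, ← hprod, Measure.map_apply hXY2 hT2]
    rfl
  rw [e1, e2, Measure.prod_apply_symm hT1, Measure.prod_apply_symm hT2,
    ← lintegral_const_mul' c _ ENNReal.ofReal_ne_top]
  apply lintegral_mono
  intro v
  have es1 : ((fun x => (x, v)) ⁻¹' {p : ℝ × ℝ | a ≤ p.1 + p.2 ∧ p.1 + p.2 ≤ a + y}) =
      {u : ℝ | (a - v) ≤ u ∧ u ≤ (a - v) + y} := by
    ext u
    simp only [Set.mem_preimage, Set.mem_setOf_eq]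
    constructor <;> rintro ⟨h1, h2⟩ <;> constructor <;> linarith
  have es2 : ((fun x => (x, v)) ⁻¹' {p : ℝ × ℝ | a ≤ p.1 + p.2}) = {u : ℝ | (a - v) ≤ u} := by
    ext u
    simp only [Set.mem_preimage, Set.mem_setOf_eq]
    constructor <;> intro h <;> linarith
  simp only []
  rw [es1, es2]
  have hm1 : MeasurableSet {u : ℝ | (a - v) ≤ u ∧ u ≤ (a - v) + y} :=
    (measurableSet_le measurable_const measurable_id).inter
      (measurableSet_le measurable_id measurable_const)
  have hm2 : MeasurableSet {u : ℝ | (a - v) ≤ u} := measurableSet_le measurable_const measurable_id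
  rw [Measure.map_apply hX hm1, Measure.map_apply hX hm2]
  exact keyX P m hm X hX hXexp hXpos y hy (a - v)


lemma keyStep {Ω : Type*} [MeasurableSpace Ω] (P : Measure Ω) [IsProbabilityMeasure P]
    (V : ℕ → Ω → ℝ) (hVmeas : ∀ i, Measurable (V i))
    (hVindep : iIndepFun V P)
    (μV : Measure ℝ) (hVdist : ∀ i, Measure.map (V i) P = μV)
    (c : ENNReal) (hc : c ≠ ⊤) (x y : ℝ)
    (hbound : ∀ a : ℝ, μV {v | a ≤ v ∧ v ≤ a + y} ≤ c * μV {v | a ≤ v}) (k : ℕ) :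
    P {ω | (∀ j, 1 ≤ j → j < k+1 → (∑ i ∈ Finset.range j, V i ω) < x) ∧
        x ≤ (∑ i ∈ Finset.range (k+1), V i ω) ∧ (∑ i ∈ Finset.range (k+1), V i ω) ≤ x + y}
      ≤ c * P {ω | (∀ j, 1 ≤ j → j < k+1 → (∑ i ∈ Finset.range j, V i ω) < x) ∧
        x ≤ (∑ i ∈ Finset.range (k+1), V i ω)} := by
  set W : Ω → ℝ := V k with hW
  set Z : Ω → (Fin k → ℝ) := fun ω i => V i ω with hZ
  have hZmeas : Measurable Z := measurable_pi_lambda _ fun i => hVmeas i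
  set σ : (Fin k → ℝ) → ℝ := fun z => ∑ i, z i with hσdef
  have hσ : Measurable σ := Finset.univ.measurable_sum fun i _ => measurable_pi_apply i
  set p : ℕ → (Fin k → ℝ) → ℝ := fun j z => ∑ i : Fin k, if (i : ℕ) < j then z i else 0 with hpdef
  have hp : ∀ j, Measurable (p j) := by
    intro j
    apply Finset.univ.measurable_sum
    intro i _
    split_ifs
    · exact measurable_pi_apply i
    · exact measurable_const
  set C : Set (Fin k → ℝ) := {z | ∀ j, 1 ≤ j → j < k+1 → p j z < x} with hCdef
  have hC : MeasurableSet C := by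
    have : C = ⋂ j, ⋂ (_ : 1 ≤ j), ⋂ (_ : j < k+1), {z | p j z < x} := by
      ext z; simp [hCdef]
    rw [this]
    exact MeasurableSet.iInter fun j => MeasurableSet.iInter fun _ =>
      MeasurableSet.iInter fun _ => measurableSet_lt (hp j) measurable_const
  set D1 : Set ((Fin k → ℝ) × ℝ) :=
    {q | q.1 ∈ C ∧ x ≤ σ q.1 + q.2 ∧ σ q.1 + q.2 ≤ x + y} with hD1def
  set D2 : Set ((Fin k → ℝ) × ℝ) := {q | q.1 ∈ C ∧ x ≤ σ q.1 + q.2} with hD2def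
  have hσq : Measurable fun q : (Fin k → ℝ) × ℝ => σ q.1 + q.2 :=
    (hσ.comp measurable_fst).add measurable_snd
  have hD1 : MeasurableSet D1 :=
    (hC.preimage measurable_fst).inter ((measurableSet_le measurable_const hσq).inter
      (measurableSet_le hσq measurable_const))
  have hD2 : MeasurableSet D2 :=
    (hC.preimage measurable_fst).inter (measurableSet_le measurable_const hσq)
  -- partial sums through p and σ
  have hpZ : ∀ j, j ≤ k → ∀ ω, p j (Z ω) = ∑ i ∈ Finset.range j, V i ω := by
    intro j hj ω
    show (∑ i : Fin k, if (i : ℕ) < j then V i ω else 0) = _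
    rw [Fin.sum_univ_eq_sum_range (fun i => if i < j then V i ω else 0) k]
    rw [← Finset.sum_subset (Finset.range_subset_range.mpr hj)
      (fun i _ hij => if_neg (by simpa using hij))]
    exact Finset.sum_congr rfl fun i hi => if_pos (Finset.mem_range.mp hi)
  have hσZ : ∀ ω, σ (Z ω) + W ω = ∑ i ∈ Finset.range (k+1), V i ω := by
    intro ω
    rw [Finset.sum_range_succ]
    congr 1
    exact Fin.sum_univ_eq_sum_range (fun i => V i ω) k
  have hZC : ∀ ω, Z ω ∈ C ↔
      (∀ j, 1 ≤ j → j < k+1 → (∑ i ∈ Finset.range j, V i ω) < x) := by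
    intro ω
    constructor
    · intro h j h1 h2
      have := h j h1 h2
      rwa [hpZ j (by omega) ω] at this
    · intro h j h1 h2
      rw [hpZ j (by omega) ω]
      exact h j h1 h2
  -- set identifications
  have hEeq : {ω | (∀ j, 1 ≤ j → j < k+1 → (∑ i ∈ Finset.range j, V i ω) < x) ∧
      x ≤ (∑ i ∈ Finset.range (k+1), V i ω) ∧ (∑ i ∈ Finset.range (k+1), V i ω) ≤ x + y} =
      (fun ω => (Z ω, W ω)) ⁻¹' D1 := by
    ext ω
    simp only [Set.mem_setOf_eq, Set.mem_preimage, hD1def, ← hσZ ω, hZC ω]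
  have hBeq : {ω | (∀ j, 1 ≤ j → j < k+1 → (∑ i ∈ Finset.range j, V i ω) < x) ∧
      x ≤ (∑ i ∈ Finset.range (k+1), V i ω)} = (fun ω => (Z ω, W ω)) ⁻¹' D2 := by
    ext ω
    simp only [Set.mem_setOf_eq, Set.mem_preimage, hD2def, ← hσZ ω, hZC ω]
  -- independence
  have hZW : IndepFun Z W P := by
    have hdisj : Disjoint (Finset.range k) ({k} : Finset ℕ) := by simp
    have h1 := hVindep.indepFun_finset (Finset.range k) {k} hdisj hVmeas
    have hφ : Measurable (fun t : (↥(Finset.range k) → ℝ) => fun i : Fin k =>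
        t ⟨(i : ℕ), Finset.mem_range.mpr i.isLt⟩) :=
      measurable_pi_lambda _ fun i => measurable_pi_apply _
    have hψ : Measurable (fun t : (↥({k} : Finset ℕ) → ℝ) =>
        t ⟨k, Finset.mem_singleton_self k⟩) := measurable_pi_apply _
    exact h1.comp hφ hψ
  have hmap : Measure.map (fun ω => (Z ω, W ω)) P = (Measure.map Z P).prod (Measure.map W P) :=
    (indepFun_iff_map_prod_eq_prod_map_map hZmeas.aemeasurable (hVmeas k).aemeasurable).mp hZW
  have hpair : Measurable fun ω => (Z ω, W ω) := hZmeas.prodMk (hVmeas k)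
  rw [hEeq, hBeq, ← Measure.map_apply hpair hD1, ← Measure.map_apply hpair hD2, hmap,
    Measure.prod_apply hD1, Measure.prod_apply hD2, ← lintegral_const_mul' c _ hc]
  apply lintegral_mono
  intro z
  simp only []
  by_cases hz : z ∈ C
  · have e1 : (Prod.mk z ⁻¹' D1) = {w : ℝ | (x - σ z) ≤ w ∧ w ≤ (x - σ z) + y} := by
      ext w
      simp only [Set.mem_preimage, hD1def, Set.mem_setOf_eq, hz, true_and]
      constructor <;> rintro ⟨h1, h2⟩ <;> constructor <;> linarith
    have e2 : (Prod.mk z ⁻¹' D2) = {w : ℝ | (x - σ z) ≤ w} := by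
      ext w
      simp only [Set.mem_preimage, hD2def, Set.mem_setOf_eq, hz, true_and]
      constructor <;> intro h <;> linarith
    rw [e1, e2, hW, hVdist k]
    exact hbound (x - σ z)
  · have e1 : (Prod.mk z ⁻¹' D1) = ∅ := by
      ext w
      simp only [Set.mem_preimage, hD1def, Set.mem_setOf_eq, hz, false_and, Set.mem_empty_iff_false]
    rw [e1]
    simp

/-- With `V = X + Y` (`X` exponential with mean `m`, `Y ≥ 0` independent), for the first
passage time `θ_x = min{n ≥ 1 : V_1 + ... + V_n ≥ x}` of the i.i.d. walk, the overshoot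
satisfies `P{V_1 + ... + V_{θ_x} ≤ x + y} ≤ min{1, y/m}` for all `x, y > 0`. -/
theorem stmt9
    {Ω : Type*} [MeasurableSpace Ω] (P : Measure Ω) [IsProbabilityMeasure P]
    (m : ℝ) (hm : 0 < m)
    (X Y : Ω → ℝ) (hX : Measurable X) (hY : Measurable Y)
    (hXY : IndepFun X Y P)
    (hXexp : ∀ t : ℝ, 0 ≤ t → P {ω | X ω ≤ t} = ENNReal.ofReal (1 - Real.exp (-t / m)))
    (hXpos : P {ω | X ω < 0} = 0)
    (hYpos : ∀ ω, 0 ≤ Y ω)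
    (V : ℕ → Ω → ℝ) (hVmeas : ∀ i, Measurable (V i))
    (hVindep : iIndepFun V P)
    (hVdist : ∀ i, Measure.map (V i) P = Measure.map (fun ω => X ω + Y ω) P)
    (x y : ℝ) (hx : 0 < x) (hy : 0 < y) :
    P {ω | ∃ n : ℕ, 1 ≤ n ∧
        (∀ k, 1 ≤ k → k < n → (∑ i ∈ Finset.range k, V i ω) < x) ∧
        x ≤ (∑ i ∈ Finset.range n, V i ω) ∧
        (∑ i ∈ Finset.range n, V i ω) ≤ x + y}
      ≤ ENNReal.ofReal (min 1 (y / m)) := by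
  set c := ENNReal.ofReal (y / m) with hcdef
  have hbound : ∀ a : ℝ,
      (Measure.map (fun ω => X ω + Y ω) P) {v | a ≤ v ∧ v ≤ a + y} ≤
        c * (Measure.map (fun ω => X ω + Y ω) P) {v | a ≤ v} :=
    keyV P m hm X Y hX hY hXY hXexp hXpos y hy
  set B : ℕ → Set Ω := fun n => {ω | (∀ j, 1 ≤ j → j < n → (∑ i ∈ Finset.range j, V i ω) < x) ∧
      x ≤ (∑ i ∈ Finset.range n, V i ω)} with hBdef
  set E : ℕ → Set Ω := fun n => {ω | (∀ j, 1 ≤ j → j < n → (∑ i ∈ Finset.range j, V i ω) < x) ∧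
      x ≤ (∑ i ∈ Finset.range n, V i ω) ∧ (∑ i ∈ Finset.range n, V i ω) ≤ x + y} with hEdef
  have hkey : ∀ k : ℕ, P (E (k+1)) ≤ c * P (B (k+1)) := fun k =>
    keyStep P V hVmeas hVindep (Measure.map (fun ω => X ω + Y ω) P) hVdist c
      ENNReal.ofReal_ne_top x y hbound k
  have hSmeas : ∀ n : ℕ, Measurable fun ω => ∑ i ∈ Finset.range n, V i ω := fun n =>
    Finset.measurable_sum _ fun i _ => hVmeas i
  have hBmeas : ∀ n, MeasurableSet (B n) := by
    intro n
    have hall : MeasurableSet {ω | ∀ j, 1 ≤ j → j < n → (∑ i ∈ Finset.range j, V i ω) < x} := by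
      have : {ω | ∀ j, 1 ≤ j → j < n → (∑ i ∈ Finset.range j, V i ω) < x} =
          ⋂ j, ⋂ (_ : 1 ≤ j), ⋂ (_ : j < n), {ω | (∑ i ∈ Finset.range j, V i ω) < x} := by
        ext ω; simp
      rw [this]
      exact MeasurableSet.iInter fun j => MeasurableSet.iInter fun _ =>
        MeasurableSet.iInter fun _ => measurableSet_lt (hSmeas j) measurable_const
    exact hall.inter (measurableSet_le measurable_const (hSmeas n))
  have hdisj : Pairwise (Function.onFun Disjoint (fun k => B (k+1))) := by
    have key2 : ∀ i j : ℕ, i < j → Disjoint (B (i+1)) (B (j+1)) := by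
      intro i j hij
      rw [Set.disjoint_left]
      intro ω h1 h2
      exact absurd h1.2 (not_le.mpr (h2.1 (i+1) (by omega) (by omega)))
    intro i j hij
    rcases hij.lt_or_gt with h | h
    · exact key2 i j h
    · exact (key2 j i h).symm
  have hsum : (∑' k : ℕ, P (B (k+1))) ≤ 1 := by
    rw [← measure_iUnion hdisj (fun k => hBmeas (k+1))]
    exact prob_le_one
  have htarget : {ω | ∃ n : ℕ, 1 ≤ n ∧
      (∀ k, 1 ≤ k → k < n → (∑ i ∈ Finset.range k, V i ω) < x) ∧
      x ≤ (∑ i ∈ Finset.range n, V i ω) ∧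
      (∑ i ∈ Finset.range n, V i ω) ≤ x + y} = ⋃ k : ℕ, E (k+1) := by
    ext ω
    simp only [Set.mem_setOf_eq, Set.mem_iUnion, hEdef]
    constructor
    · rintro ⟨n, h1, h⟩
      exact ⟨n - 1, by rw [Nat.sub_add_cancel h1]; exact h⟩
    · rintro ⟨k, h⟩
      exact ⟨k + 1, by omega, h⟩
  have hmain : P {ω | ∃ n : ℕ, 1 ≤ n ∧
      (∀ k, 1 ≤ k → k < n → (∑ i ∈ Finset.range k, V i ω) < x) ∧
      x ≤ (∑ i ∈ Finset.range n, V i ω) ∧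
      (∑ i ∈ Finset.range n, V i ω) ≤ x + y} ≤ c := by
    rw [htarget]
    calc P (⋃ k : ℕ, E (k+1)) ≤ ∑' k : ℕ, P (E (k+1)) := measure_iUnion_le _
      _ ≤ ∑' k : ℕ, c * P (B (k+1)) := ENNReal.tsum_le_tsum hkey
      _ = c * ∑' k : ℕ, P (B (k+1)) := ENNReal.tsum_mul_left
      _ ≤ c * 1 := mul_le_mul_right hsum c
      _ = c := mul_one c
  rcases le_total 1 (y / m) with h | h
  · rw [min_eq_left h]
    simpa using prob_le_one
  · rw [min_eq_right h]
    exact hmain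
end
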